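/- If F is an initial (shifted-downward-closed under the shifting partial order) t-intersecting family of subsets of [n], then the subfamily of sets in F disjoint from [s] is (t+s)-intersecting. -/

import Mathlib

def prec (A B : Finset ℕ) : Prop :=
  List.Forall₂ (· ≤ ·) (A.sort (· ≤ ·)) (B.sort (· ≤ ·))

private lemma forall₂_cons_erase {x : ℕ} :
    ∀ (a : ℕ) (l : List ℕ), l.Pairwise (· ≤ ·) → x ∈ l → (∀ z ∈ l, a ≤ z) →
      List.Forall₂ (· ≤ ·) (a :: l.erase x) l := by
  intro a l
  induction l generalizing a with
  | nil => intro _ h; simp at h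
  | cons b l ih =>
    intro hs hx ha
    by_cases hbx : b = x
    · subst hbx
      rw [List.erase_cons_head]
      exact List.Forall₂.cons (ha b (by simp)) (List.forall₂_same.2 fun z _ => le_refl z)
    · rw [List.erase_cons_tail (by simpa using hbx)]
      refine List.Forall₂.cons (ha b (by simp)) ?_
      exact ih b hs.of_cons ((List.mem_cons.1 hx).resolve_left fun h => hbx h.symm)
        fun z hz => List.rel_of_pairwise_cons hs hz

private lemma forall₂_orderedInsert_erase {y x : ℕ} (hyx : y ≤ x) :
    ∀ l : List ℕ, l.Pairwise (· ≤ ·) → x ∈ l →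
      List.Forall₂ (· ≤ ·) (List.orderedInsert (· ≤ ·) y (l.erase x)) l := by
  intro l
  induction l with
  | nil => intro _ h; simp at h
  | cons a l ih =>
    intro hs hx
    by_cases hax : a = x
    · subst hax
      rw [List.erase_cons_head]
      have hyl : ∀ z ∈ l, y ≤ z := fun z hz => hyx.trans (List.rel_of_pairwise_cons hs hz)
      have : List.orderedInsert (· ≤ ·) y l = y :: l := by
        cases l with
        | nil => rfl
        | cons b l => simp [List.orderedInsert, hyl b (by simp)]
      rw [this]
      exact List.Forall₂.cons hyx (List.forall₂_same.2 fun z _ => le_refl z)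
    · rw [List.erase_cons_tail (by simpa using hax)]
      have hxl : x ∈ l := (List.mem_cons.1 hx).resolve_left fun h => hax h.symm
      by_cases hya : y ≤ a
      · rw [show List.orderedInsert (· ≤ ·) y (a :: l.erase x) = y :: a :: l.erase x by
          simp [List.orderedInsert, hya]]
        exact List.Forall₂.cons hya <| forall₂_cons_erase a l hs.of_cons hxl
          (fun z hz => List.rel_of_pairwise_cons hs hz)
      · rw [show List.orderedInsert (· ≤ ·) y (a :: l.erase x) =
            a :: List.orderedInsert (· ≤ ·) y (l.erase x) by
          simp [List.orderedInsert, hya]]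
        exact List.Forall₂.cons (le_refl a) (ih hs.of_cons hxl)

private lemma prec_insert_erase {B : Finset ℕ} {x y : ℕ} (hx : x ∈ B) (hy : y ∉ B)
    (hyx : y ≤ x) : prec (insert y (B.erase x)) B := by
  unfold prec
  have hsortB : (B.sort (· ≤ ·)).Pairwise (· ≤ ·) := Finset.pairwise_sort _ _
  have hxs : x ∈ B.sort (· ≤ ·) := (Finset.mem_sort _).2 hx
  have key : (insert y (B.erase x)).sort (· ≤ ·) =
      List.orderedInsert (· ≤ ·) y ((B.sort (· ≤ ·)).erase x) := by
    apply List.Perm.eq_of_pairwise' (Finset.pairwise_sort _ _)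
      (List.Pairwise.orderedInsert y _ (hsortB.sublist List.erase_sublist)) ?_
    have h1 : ((insert y (B.erase x)).sort (· ≤ ·) : Multiset ℕ) =
        (List.orderedInsert (· ≤ ·) y ((B.sort (· ≤ ·)).erase x) : Multiset ℕ) := by
      rw [Finset.sort_eq]
      have : (List.orderedInsert (· ≤ ·) y ((B.sort (· ≤ ·)).erase x) : Multiset ℕ) =
          (y :: (B.sort (· ≤ ·)).erase x : List ℕ) :=
        Quot.sound (List.perm_orderedInsert _ _ _)
      rw [this]
      have h2 : ((B.sort (· ≤ ·)).erase x : Multiset ℕ) = B.val.erase x := by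
        rw [← Multiset.coe_erase, Finset.sort_eq]
      rw [Finset.insert_val_of_notMem (fun h => hy (Finset.mem_erase.1 h).2),
        Finset.erase_val, ← Multiset.cons_coe, h2]
    exact Multiset.coe_eq_coe.1 h1
  rw [key]
  exact forall₂_orderedInsert_erase hyx _ hsortB hxs

theorem stmt_0 (n s t : ℕ) (ht : 1 ≤ t) (F : Finset (Finset ℕ))
    (hsub : ∀ A ∈ F, A ⊆ Finset.Icc 1 n)
    (hinit : ∀ A B : Finset ℕ, A ⊆ Finset.Icc 1 n → prec A B → B ∈ F → A ∈ F)
    (hint : ∀ A ∈ F, ∀ B ∈ F, t ≤ (A ∩ B).card) :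
    ∀ A ∈ F, ∀ B ∈ F, A ∩ Finset.Icc 1 s = ∅ → B ∩ Finset.Icc 1 s = ∅ →
      t + s ≤ (A ∩ B).card := by
  induction s with
  | zero => intro A hA B hB _ _; simpa using hint A hA B hB
  | succ s ih =>
    intro A hA B hB hAd hBd
    have hAd' : A ∩ Finset.Icc 1 s = ∅ := by
      rw [← Finset.subset_empty, ← hAd]
      exact Finset.inter_subset_inter (subset_refl _) (Finset.Icc_subset_Icc_right (Nat.le_succ s))
    have hBd' : B ∩ Finset.Icc 1 s = ∅ := by
      rw [← Finset.subset_empty, ← hBd]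
      exact Finset.inter_subset_inter (subset_refl _) (Finset.Icc_subset_Icc_right (Nat.le_succ s))
    have hcard : t + s ≤ (A ∩ B).card := ih A hA B hB hAd' hBd'
    have hne : (A ∩ B).Nonempty := Finset.card_pos.1 (by omega)
    obtain ⟨x, hxAB⟩ := hne
    have hxA : x ∈ A := (Finset.mem_inter.1 hxAB).1
    have hxB : x ∈ B := (Finset.mem_inter.1 hxAB).2
    have hxn : x ∈ Finset.Icc 1 n := hsub A hA hxA
    have hxgt : s + 1 < x := by
      by_contra h
      have : x ∈ A ∩ Finset.Icc 1 (s + 1) := Finset.mem_inter.2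
        ⟨hxA, Finset.mem_Icc.2 ⟨(Finset.mem_Icc.1 hxn).1, by omega⟩⟩
      rw [hAd] at this; exact absurd this (Finset.notMem_empty x)
    have hyB : (s + 1 : ℕ) ∉ B := by
      intro h
      have : (s + 1 : ℕ) ∈ B ∩ Finset.Icc 1 (s + 1) := Finset.mem_inter.2
        ⟨h, Finset.mem_Icc.2 ⟨by omega, le_refl _⟩⟩
      rw [hBd] at this; exact absurd this (Finset.notMem_empty _)
    set B' : Finset ℕ := insert (s + 1) (B.erase x) with hB'def
    have hprec : prec B' B := prec_insert_erase hxB hyB (by omega)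
    have hB'sub : B' ⊆ Finset.Icc 1 n := by
      intro z hz
      rcases Finset.mem_insert.1 hz with h | h
      · exact Finset.mem_Icc.2 ⟨by omega, by
          have := (Finset.mem_Icc.1 hxn).2; omega⟩
      · exact hsub B hB (Finset.erase_subset _ _ h)
    have hB'F : B' ∈ F := hinit B' B hB'sub hprec hB
    have hB'd : B' ∩ Finset.Icc 1 s = ∅ := by
      rw [Finset.eq_empty_iff_forall_notMem]
      intro z hz
      rcases Finset.mem_inter.1 hz with ⟨hz1, hz2⟩
      have hz2' := Finset.mem_Icc.1 hz2
      rcases Finset.mem_insert.1 hz1 with h | h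
      · omega
      · have : z ∈ B ∩ Finset.Icc 1 s := Finset.mem_inter.2
          ⟨Finset.erase_subset _ _ h, hz2⟩
        rw [hBd'] at this; exact absurd this (Finset.notMem_empty _)
    have h2 : t + s ≤ (A ∩ B').card := ih A hA B' hB'F hAd' hB'd
    have hAB' : A ∩ B' = (A ∩ B).erase x := by
      ext z
      simp only [Finset.mem_inter, Finset.mem_insert, Finset.mem_erase, hB'def]
      constructor
      · rintro ⟨hzA, h | ⟨hzx, hzB⟩⟩
        · exfalso
          have : z ∈ A ∩ Finset.Icc 1 (s + 1) := Finset.mem_inter.2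
            ⟨hzA, Finset.mem_Icc.2 ⟨by
              have := Finset.mem_Icc.1 (hsub A hA hzA); omega, by omega⟩⟩
          rw [hAd] at this; exact absurd this (Finset.notMem_empty _)
        · exact ⟨hzx, hzA, hzB⟩
      · rintro ⟨hzx, hzA, hzB⟩
        exact ⟨hzA, Or.inr ⟨hzx, hzB⟩⟩
    rw [hAB', Finset.card_erase_of_mem hxAB] at h2
    omega
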